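/- Let D(S) be a strongly connected restricted de Bruijn graph on arc set S. If u is an integer vector indexed by S with all entries strictly positive, satisfying the flow conservation equations B(D(S))·u = 0 and 1^T u = n - ℓ + 1, then there exists a closed word x of length n over the alphabet, all of whose ℓ-grams lie in S, whose ℓ-gram profile vector equals u. -/

import Mathlib

set_option linter.unusedSectionVars false

section Euler

variable {α β : Type*} [DecidableEq α] [DecidableEq β] (t h : β → α)

inductive IsWalk : List β → α → α → Prop
  | nil (a : α) : IsWalk [] a a
  | cons (z : β) (l : List β) (b : α) (hw : IsWalk l (h z) b) : IsWalk (z :: l) (t z) b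

def outm (m : Multiset β) (v : α) : ℕ := (m.filter fun z => t z = v).card

def inm (m : Multiset β) (v : α) : ℕ := (m.filter fun z => h z = v).card

lemma outm_cons (z : β) (m : Multiset β) (v : α) :
    outm t (z ::ₘ m) v = outm t m v + if t z = v then 1 else 0 := by
  simp only [outm, Multiset.filter_cons]
  split <;> simp [add_comm]

lemma inm_cons (z : β) (m : Multiset β) (v : α) :
    inm h (z ::ₘ m) v = inm h m v + if h z = v then 1 else 0 := by
  simp only [inm, Multiset.filter_cons]
  split <;> simp [add_comm]

lemma IsWalk.flow {l : List β} {a b : α} (w : IsWalk t h l a b) (v : α) :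
    outm t (↑l) v + (if b = v then 1 else 0) = inm h (↑l) v + (if a = v then 1 else 0) := by
  induction w with
  | nil a => simp [outm, inm]
  | cons z l b hw ih =>
    rw [← Multiset.cons_coe, outm_cons, inm_cons]
    omega

lemma IsWalk.append {l₁ l₂ : List β} {a w b : α} (h1 : IsWalk t h l₁ a w)
    (h2 : IsWalk t h l₂ w b) : IsWalk t h (l₁ ++ l₂) a b := by
  induction h1 with
  | nil => simpa
  | cons z l b' hw ih => exact .cons z _ _ (ih h2)

lemma IsWalk.split {l : List β} {a b : α} {z : β} (hw : IsWalk t h l a b) (hz : z ∈ l) :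
    ∃ l₁ l₂, l = l₁ ++ z :: l₂ ∧ IsWalk t h (l₁ ++ [z]) a (h z) ∧ IsWalk t h l₂ (h z) b := by
  induction hw with
  | nil a => simp at hz
  | cons w l b hw ih =>
    rcases List.mem_cons.mp hz with rfl | hz'
    · exact ⟨[], l, rfl, .cons _ _ _ (.nil _), hw⟩
    · obtain ⟨l₁, l₂, rfl, h1, h2⟩ := ih hz'
      exact ⟨w :: l₁, l₂, rfl, .cons _ _ _ h1, h2⟩

lemma IsWalk.head' {z : β} {l : List β} {a b : α} (hw : IsWalk t h (z :: l) a b) :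
    t z = a := by
  cases hw; rfl

lemma IsWalk.chain {l : List β} {a b : α} (hw : IsWalk t h l a b) :
    ∀ i (hi : i + 1 < l.length), t (l[i + 1]'hi) = h (l[i]'(by omega)) := by
  induction hw with
  | nil a => simp
  | cons z l b hw ih =>
    intro i hi
    match i with
    | 0 =>
      match l, hw with
      | z' :: l', hw =>
        simp only [List.getElem_cons_succ, List.getElem_cons_zero]
        exact hw.head'
    | i + 1 =>
      simp only [List.getElem_cons_succ]
      exact ih i (by simpa using hi)

lemma IsWalk.last {l : List β} {a b : α} (hw : IsWalk t h l a b) :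
    ∀ i (hi : i + 1 = l.length), h (l[i]'(by omega)) = b := by
  induction hw with
  | nil a => simp
  | cons z l b hw ih =>
    intro i hi
    match i with
    | 0 =>
      have hl : l = [] := by
        have : l.length = 0 := by simpa using hi.symm
        simpa using this
      subst hl
      cases hw
      simp
    | i + 1 =>
      simp only [List.getElem_cons_succ]
      exact ih i (by simpa using hi)

lemma exists_walk_to (w : α) : ∀ (N : ℕ) (r : Multiset β) (y : α), r.card ≤ N →
    (∀ v, outm t r v + (if w = v then 1 else 0) = inm h r v + (if y = v then 1 else 0)) →
    ∃ c : List β, IsWalk t h c y w ∧ (↑c : Multiset β) ≤ r := by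
  intro N
  induction N with
  | zero =>
    intro r y hcard hbal
    have hr : r = 0 := by
      rw [← Multiset.card_eq_zero]; omega
    subst hr
    have hb := hbal y
    simp [outm, inm] at hb
    subst hb
    exact ⟨[], .nil _, by simp⟩
  | succ N ih =>
    intro r y hcard hbal
    by_cases hyw : y = w
    · subst hyw
      exact ⟨[], .nil _, by simp⟩
    · have hout : 0 < outm t r y := by
        have hb := hbal y
        rw [if_neg (fun hh => hyw hh.symm), if_pos rfl] at hb
        omega
      obtain ⟨z, hz, htz⟩ : ∃ z ∈ r, t z = y := by
        have : (r.filter fun z => t z = y) ≠ 0 := by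
          intro hfe
          rw [outm, hfe] at hout
          simp at hout
        obtain ⟨z, hz⟩ := Multiset.exists_mem_of_ne_zero this
        exact ⟨z, (Multiset.mem_filter.mp hz).1, (Multiset.mem_filter.mp hz).2⟩
      subst htz
      have hbal' : ∀ v, outm t (r.erase z) v + (if w = v then 1 else 0)
          = inm h (r.erase z) v + (if h z = v then 1 else 0) := by
        intro v
        have hb := hbal v
        rw [← Multiset.cons_erase hz, outm_cons, inm_cons] at hb
        omega
      have hcard' : (r.erase z).card ≤ N := by
        have h1 : 0 < r.card := Multiset.card_pos.mpr (fun h0 => by simp [h0] at hz)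
        rw [Multiset.card_erase_of_mem hz, Nat.pred_eq_sub_one]
        omega
      obtain ⟨c, hc, hcle⟩ := ih (r.erase z) (h z) hcard' hbal'
      refine ⟨z :: c, .cons z c w hc, ?_⟩
      rw [← Multiset.cons_erase hz, ← Multiset.cons_coe]
      exact Multiset.cons_le_cons _ hcle

lemma exists_unused (m : Multiset β) (l : List β) (a : α) (hw : IsWalk t h l a a)
    (hle : (↑l : Multiset β) ≤ m) (hne : (↑l : Multiset β) ≠ m)
    (hconn : ∀ z ∈ m, Relation.ReflTransGen
      (fun x y => ∃ w ∈ m, t w = x ∧ h w = y) a (t z)) :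
    ∃ z, z ∈ m - ↑l ∧ (t z = a ∨ ∃ w ∈ l, h w = t z) := by
  by_contra hcon
  push_neg at hcon
  have hvis : ∀ v, Relation.ReflTransGen
      (fun x y => ∃ w ∈ m, t w = x ∧ h w = y) a v → (v = a ∨ ∃ w ∈ l, h w = v) := by
    intro v hv
    induction hv with
    | refl => exact Or.inl rfl
    | tail hab hrel ih =>
      obtain ⟨z, hzm, htz, hhz⟩ := hrel
      have hzl : z ∈ l := by
        by_contra hzl
        have hmem : z ∈ m - ↑l := by
          rw [← Multiset.count_pos, Multiset.count_sub]
          have h1 : Multiset.count z (↑l : Multiset β) = 0 := by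
            rw [Multiset.coe_count, List.count_eq_zero]
            exact hzl
          have h2 : 0 < Multiset.count z m := Multiset.count_pos.mpr hzm
          omega
        obtain ⟨hc1, hc2⟩ := hcon z hmem
        rcases ih with h' | ⟨w, hwl, hww⟩
        · exact hc1 (htz.trans h')
        · exact hc2 w hwl (hww.symm ▸ htz ▸ rfl)
      exact Or.inr ⟨z, hzl, hhz⟩
  obtain ⟨z₀, hz₀⟩ : ∃ z₀, z₀ ∈ m - ↑l := by
    have : m - ↑l ≠ 0 := by
      intro h0
      apply hne
      apply Multiset.eq_of_le_of_card_le hle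
      have hcs := Multiset.card_sub hle
      rw [h0] at hcs
      simp only [Multiset.card_zero] at hcs
      omega
    exact Multiset.exists_mem_of_ne_zero this
  have hz₀m : z₀ ∈ m := Multiset.mem_of_le (tsub_le_self) hz₀
  obtain ⟨hc1, hc2⟩ := hcon z₀ hz₀
  rcases hvis (t z₀) (hconn z₀ hz₀m) with h' | ⟨w, hwl, hww⟩
  · exact hc1 h'
  · exact hc2 w hwl hww

lemma euler_loop (m : Multiset β) (a : α)
    (hbal : ∀ v, outm t m v = inm h m v)
    (hconn : ∀ z ∈ m, Relation.ReflTransGen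
      (fun x y => ∃ w ∈ m, t w = x ∧ h w = y) a (t z)) :
    ∀ (N : ℕ) (l : List β), IsWalk t h l a a → (↑l : Multiset β) ≤ m →
      m.card ≤ l.length + N → ∃ l', IsWalk t h l' a a ∧ (↑l' : Multiset β) = m := by
  intro N
  induction N with
  | zero =>
    intro l hw hle hcard
    refine ⟨l, hw, Multiset.eq_of_le_of_card_le hle ?_⟩
    simpa using hcard
  | succ N ih =>
    intro l hw hle hcard
    by_cases heq : (↑l : Multiset β) = m
    · exact ⟨l, hw, heq⟩
    obtain ⟨z, hzmem, hvis⟩ := exists_unused t h m l a hw hle heq hconn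
    have hlrsub : ∀ v, outm t (↑l) v ≤ outm t m v ∧ inm h (↑l) v ≤ inm h m v := by
      intro v
      exact ⟨Multiset.card_le_card (Multiset.filter_le_filter (fun z => t z = v) hle),
        Multiset.card_le_card (Multiset.filter_le_filter (fun z => h z = v) hle)⟩
    have hrbal : ∀ v, outm t (m - ↑l) v = inm h (m - ↑l) v := by
      intro v
      have hf := IsWalk.flow t h hw v
      have h1 : outm t (↑l : Multiset β) v = inm h (↑l) v := by omega
      have h2 : outm t (m - ↑l) v = outm t m v - outm t (↑l) v := by
        rw [outm, outm, outm, Multiset.filter_sub, Multiset.card_sub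
          (Multiset.filter_le_filter _ hle)]
      have h3 : inm h (m - ↑l) v = inm h m v - inm h (↑l) v := by
        rw [inm, inm, inm, Multiset.filter_sub, Multiset.card_sub
          (Multiset.filter_le_filter _ hle)]
      have h4 := hbal v
      have h5 := hlrsub v
      omega
    have hbal' : ∀ v, outm t ((m - ↑l).erase z) v + (if t z = v then 1 else 0)
        = inm h ((m - ↑l).erase z) v + (if h z = v then 1 else 0) := by
      intro v
      have hb := hrbal v
      rw [← Multiset.cons_erase hzmem, outm_cons, inm_cons] at hb
      omega
    obtain ⟨c, hc, hcle⟩ := exists_walk_to t h (t z) ((m - ↑l).erase z).card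
      ((m - ↑l).erase z) (h z) le_rfl hbal'
    have hcyc : IsWalk t h (z :: c) (t z) (t z) := .cons z c (t z) hc
    have hcycle_le : (↑(z :: c) : Multiset β) ≤ m - ↑l := by
      rw [← Multiset.cons_erase hzmem, ← Multiset.cons_coe]
      exact Multiset.cons_le_cons _ hcle
    have hmain : ∀ l'' : List β, IsWalk t h l'' a a →
        (↑l'' : Multiset β) = ↑(z :: c) + ↑l →
        ∃ l', IsWalk t h l' a a ∧ (↑l' : Multiset β) = m := by
      intro l'' hw'' hml
      apply ih l'' hw''
      · rw [hml]
        calc (↑(z :: c) : Multiset β) + ↑l ≤ (m - ↑l) + ↑l :=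
              add_le_add hcycle_le le_rfl
          _ = m := tsub_add_cancel_of_le hle
      · have hlen := congrArg Multiset.card hml
        simp only [Multiset.coe_card, Multiset.card_add, List.length_cons] at hlen
        omega
    rcases hvis with hta | ⟨wz, hwz, hhw⟩
    · refine hmain ((z :: c) ++ l) ((hta ▸ hcyc).append t h hw) ?_
      simp
    · obtain ⟨l₁, l₂, rfl, h1, h2⟩ := hw.split t h hwz
      refine hmain ((l₁ ++ [wz]) ++ ((z :: c) ++ l₂))
        ((h1.append t h ((hhw ▸ hcyc).append t h (hhw ▸ h2)))) ?_
      have hcl : wz :: l₂ = [wz] ++ l₂ := rfl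
      rw [hcl]
      simp only [← Multiset.coe_add]
      abel
  
theorem euler_main (m : Multiset β) (a : α)
    (hbal : ∀ v, outm t m v = inm h m v)
    (hconn : ∀ z ∈ m, Relation.ReflTransGen
      (fun x y => ∃ w ∈ m, t w = x ∧ h w = y) a (t z)) :
    ∃ l, IsWalk t h l a a ∧ (↑l : Multiset β) = m :=
  euler_loop t h m a hbal hconn m.card [] (.nil a) (by simp) (by simp)

lemma IsWalk.first {l : List β} {a b : α}
    (hw : IsWalk t h l a b) (hl : 0 < l.length) : t (l[0]'hl) = a := by
  match l, hw with
  | z :: l', hw => simpa using hw.head'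

end Euler

lemma multiset_card_sum {γ β : Type*} (s : Finset γ) (f : γ → Multiset β) :
    (∑ z ∈ s, f z).card = ∑ z ∈ s, (f z).card := by
  classical
  induction s using Finset.induction_on with
  | empty => simp
  | insert _ _ ha ih =>
    rw [Finset.sum_insert ha, Finset.sum_insert ha, Multiset.card_add, ih]

lemma card_filter_sum {γ β : Type*} (s : Finset γ) (f : γ → Multiset β)
    (p : β → Prop) [DecidablePred p] :
    ((∑ z ∈ s, f z).filter p).card = ∑ z ∈ s, ((f z).filter p).card := by
  classical
  induction s using Finset.induction_on with
  | empty => simp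
  | insert _ _ ha ih =>
    rw [Finset.sum_insert ha, Finset.sum_insert ha, Multiset.filter_add,
      Multiset.card_add, ih]

lemma filter_replicate_card {β : Type*} (k : ℕ) (z : β) (p : β → Prop) [DecidablePred p] :
    ((Multiset.replicate k z).filter p).card = if p z then k else 0 := by
  induction k with
  | zero => simp
  | succ k ih =>
    by_cases hp : p z <;>
      simp [Multiset.replicate_succ, Multiset.filter_cons, hp, ih]

lemma count_eq {β : Type*} [DecidableEq β] :
    ∀ (l : List β) (g : ℕ → β), (∀ i (hi : i < l.length), g i = l[i]) →
    ∀ z, ((Finset.range l.length).filter (fun i => g i = z)).card = l.count z := by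
  intro l
  induction l with
  | nil => simp
  | cons w l ih =>
    intro g hg z
    have h0 : g 0 = w := hg 0 (by simp)
    rw [List.length_cons, Finset.card_filter, Finset.sum_range_succ', ← Finset.card_filter]
    rw [ih (fun i => g (i + 1)) (fun i hi => by show g (i + 1) = l[i]; rw [hg (i + 1) (by simpa using hi)]; rfl) z]
    rw [List.count_cons, h0]
    simp only [beq_iff_eq]


/-- Prefix of length `L` of an `(L+1)`-gram. -/
def pre (q L : ℕ) (z : Fin (L + 1) → Fin q) : Fin L → Fin q := fun i => z i.castSucc

/-- Suffix of length `L` of an `(L+1)`-gram. -/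
def suf (q L : ℕ) (z : Fin (L + 1) → Fin q) : Fin L → Fin q := fun i => z i.succ

/-- Node set of the restricted de Bruijn graph `D(S)`: the `L`-grams
appearing in `S`. -/
def VS (q L : ℕ) (S : Finset (Fin (L + 1) → Fin q)) : Finset (Fin L → Fin q) :=
  S.image (pre q L) ∪ S.image (suf q L)

/-- Arc relation of `D(S)`. -/
def step (q L : ℕ) (S : Finset (Fin (L + 1) → Fin q)) (a b : Fin L → Fin q) : Prop :=
  ∃ z ∈ S, pre q L z = a ∧ suf q L z = b

/-- The `(L+1)`-gram of `x` starting at position `i`. -/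
def gram (q ℓ : ℕ) (x : ℕ → Fin q) (i : ℕ) : Fin ℓ → Fin q := fun j => x (i + j)

/-- The profile vector of a word of length `n`. -/
def profile (q ℓ n : ℕ) (x : ℕ → Fin q) (z : Fin ℓ → Fin q) : ℕ :=
  ((Finset.range (n - ℓ + 1)).filter (fun i => gram q ℓ x i = z)).card

/-- If `D(S)` is strongly connected and `u` is a strictly positive integer
vector supported on `S` satisfying the flow conservation equations and whose
entries sum to `n - ℓ + 1`, then `u` is the `ℓ`-gram profile vector of some
closed word of length `n` all of whose `ℓ`-grams lie in `S`. -/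
theorem euler_lemma (q L n : ℕ) (S : Finset (Fin (L + 1) → Fin q))
    (hn : L + 1 ≤ n)
    (hconn : ∀ a ∈ VS q L S, ∀ b ∈ VS q L S,
      Relation.ReflTransGen (step q L S) a b)
    (u : (Fin (L + 1) → Fin q) → ℤ)
    (hpos : ∀ z ∈ S, 0 < u z) (hzero : ∀ z ∉ S, u z = 0)
    (hflow : ∀ v : Fin L → Fin q,
      ∑ z ∈ S.filter (fun z => suf q L z = v), u z =
      ∑ z ∈ S.filter (fun z => pre q L z = v), u z)
    (hsum : ∑ z ∈ S, u z = (n : ℤ) - L) :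
    ∃ x : ℕ → Fin q,
      (∀ j : Fin L, x j = x (n - L + j)) ∧
      (∀ i, i + (L + 1) ≤ n → gram q (L + 1) x i ∈ S) ∧
      (∀ z : Fin (L + 1) → Fin q, (profile q (L + 1) n x z : ℤ) = u z) := by
  have hk1 : 1 ≤ n - L := by omega
  have hSne : S.Nonempty := by
    by_contra hS
    rw [Finset.not_nonempty_iff_eq_empty] at hS
    rw [hS, Finset.sum_empty] at hsum
    omega
  obtain ⟨z₀, hz₀⟩ := hSne
  set m : Multiset (Fin (L + 1) → Fin q) := ∑ z ∈ S, Multiset.replicate (u z).toNat z with hm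
  have hcount : ∀ z, m.count z = if z ∈ S then (u z).toNat else 0 := by
    intro z
    rw [hm, Multiset.count_sum']
    simp [Multiset.count_replicate, Finset.sum_ite_eq']
  have hmem : ∀ z, z ∈ m ↔ z ∈ S := by
    intro z
    rw [← Multiset.count_pos, hcount]
    by_cases hzS : z ∈ S <;> simp [hzS]
    have := hpos z hzS
    omega
  have hcardm : m.card = n - L := by
    have hc1 : (m.card : ℤ) = ∑ z ∈ S, u z := by
      rw [hm, multiset_card_sum]
      push_cast
      refine Finset.sum_congr rfl fun z hz => ?_
      simp [Int.toNat_of_nonneg (hpos z hz).le]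
    rw [hsum] at hc1
    omega
  have key : ∀ (p : (Fin (L + 1) → Fin q) → Prop) (hp : DecidablePred p),
      ((m.filter p).card : ℤ) = ∑ z ∈ S.filter p, u z := by
    intro p hp
    rw [hm, card_filter_sum, Finset.sum_filter]
    push_cast
    refine Finset.sum_congr rfl fun z hz => ?_
    rw [filter_replicate_card]
    split <;> simp [Int.toNat_of_nonneg (hpos z hz).le]
  have hbal : ∀ v, outm (pre q L) m v = inm (suf q L) m v := by
    intro v
    have h1 : ((outm (pre q L) m v : ℤ)) = ∑ z ∈ S.filter (fun z => pre q L z = v), u z := by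
      rw [outm]; exact key _ _
    have h2 : ((inm (suf q L) m v : ℤ)) = ∑ z ∈ S.filter (fun z => suf q L z = v), u z := by
      rw [inm]; exact key _ _
    have h3 := hflow v
    omega
  set a : Fin L → Fin q := pre q L z₀ with hadef
  have haVS : a ∈ VS q L S := Finset.mem_union_left _ (Finset.mem_image_of_mem _ hz₀)
  have hconn' : ∀ z ∈ m, Relation.ReflTransGen
      (fun x y => ∃ w ∈ m, pre q L w = x ∧ suf q L w = y) a (pre q L z) := by
    intro z hzm
    have hzS : z ∈ S := (hmem z).mp hzm
    have hstep : Relation.ReflTransGen (step q L S) a (pre q L z) :=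
      hconn a haVS _ (Finset.mem_union_left _ (Finset.mem_image_of_mem _ hzS))
    exact Relation.ReflTransGen.mono
      (by intro x y hxy; obtain ⟨w, hwS, hw1, hw2⟩ := hxy; exact ⟨w, (hmem w).mpr hwS, hw1, hw2⟩) _ _ hstep
  obtain ⟨l, hwalk, hlm⟩ := euler_main (pre q L) (suf q L) m a hbal hconn'
  have hlen : l.length = n - L := by
    rw [← hcardm, ← hlm, Multiset.coe_card]
  set k := n - L with hkdef
  have hchain := IsWalk.chain (pre q L) (suf q L) hwalk
  have hshift : ∀ i r j (h1 : i + r < k) (h2 : j + r ≤ L),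
      (l[i + r]'(by omega)) (⟨j, by omega⟩ : Fin (L + 1))
        = (l[i]'(by omega)) (⟨j + r, by omega⟩ : Fin (L + 1)) := by
    intro i r
    induction r with
    | zero => intro j h1 h2; simp
    | succ r ih =>
      intro j h1 h2
      have hc := hchain (i + r) (by omega)
      have e1 : (l[i + (r + 1)]'(by omega)) (⟨j, by omega⟩ : Fin (L + 1))
          = pre q L (l[i + r + 1]'(by omega)) (⟨j, by omega⟩ : Fin L) := rfl
      rw [e1, hc]
      have e2 : suf q L (l[i + r]'(by omega)) (⟨j, by omega⟩ : Fin L)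
          = (l[i + r]'(by omega)) (⟨j + 1, by omega⟩ : Fin (L + 1)) := rfl
      rw [e2, ih (j + 1) (by omega) (by omega)]
      simp only [show j + 1 + r = j + (r + 1) from by omega]
  set x : ℕ → Fin q := fun i =>
    if hik : i < k then (l[i]'(by omega)) (⟨0, by omega⟩ : Fin (L + 1))
    else (l[k - 1]'(by omega)) (⟨min (i - (k - 1)) L, by omega⟩ : Fin (L + 1)) with hxdef
  have hgel : ∀ (i1 i2 : ℕ) (h1 : i1 < l.length) (h2 : i2 < l.length), i1 = i2 →
      l[i1]'h1 = l[i2]'h2 := by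
    intro i1 i2 h1 h2 he
    subst he
    rfl
  have hx : ∀ i j (hik : i < k) (hjL : j ≤ L),
      x (i + j) = (l[i]'(by omega)) (⟨j, by omega⟩ : Fin (L + 1)) := by
    intro i j hik hjL
    by_cases hij : i + j < k
    · rw [hxdef]
      simp only [dif_pos hij]
      have := hshift i j 0 (by omega) (by omega)
      simpa using this
    · rw [hxdef]
      simp only [dif_neg hij]
      simp only [show min (i + j - (k - 1)) L = i + j - (k - 1) from by omega]
      have hsh := hshift i (k - 1 - i) (i + j - (k - 1)) (by omega) (by omega)
      simp only [show i + j - (k - 1) + (k - 1 - i) = j from by omega] at hsh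
      rw [hgel (k - 1) (i + (k - 1 - i)) (by omega) (by omega) (by omega)]
      exact hsh
  have hk0 : 0 < l.length := by omega
  have hfirst := IsWalk.first (pre q L) (suf q L) hwalk hk0
  have hlast := IsWalk.last (pre q L) (suf q L) hwalk (k - 1) (by omega)
  refine ⟨x, ?_, ?_, ?_⟩
  · intro jf
    have e1 : x jf = a jf := by
      have : (jf : ℕ) = 0 + (jf : ℕ) := by omega
      rw [this, hx 0 jf (by omega) (by omega)]
      have : (⟨(jf : ℕ), by omega⟩ : Fin (L + 1)) = jf.castSucc := by
        exact Fin.ext rfl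
      rw [this]
      exact congrFun hfirst jf
    have e2 : x (n - L + jf) = a jf := by
      have : n - L + (jf : ℕ) = (k - 1) + ((jf : ℕ) + 1) := by omega
      rw [this, hx (k - 1) ((jf : ℕ) + 1) (by omega) (by omega)]
      have : (⟨(jf : ℕ) + 1, by omega⟩ : Fin (L + 1)) = jf.succ := by
        exact Fin.ext rfl
      rw [this]
      exact congrFun hlast jf
    rw [e1, e2]
  · intro i hi
    have hik : i < k := by omega
    have hgram : gram q (L + 1) x i = l[i]'(by omega) := by
      funext jf
      show x (i + (jf : ℕ)) = _
      rw [hx i jf hik (by omega)]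
    rw [hgram]
    apply (hmem _).mp
    have hmm : l[i]'(by omega) ∈ (↑l : Multiset (Fin (L + 1) → Fin q)) :=
      Multiset.mem_coe.mpr (List.getElem_mem _)
    rw [hlm] at hmm
    exact hmm
  · intro z
    have hgramAll : ∀ i (hi : i < l.length), gram q (L + 1) x i = l[i] := by
      intro i hi
      funext jf
      show x (i + (jf : ℕ)) = _
      rw [hx i jf (by omega) (by omega)]
    have hprof : profile q (L + 1) n x z = l.count z := by
      rw [profile, show n - (L + 1) + 1 = l.length from by omega]
      exact count_eq l _ hgramAll z
    have hcnt : l.count z = Multiset.count z m := by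
      rw [← hlm, Multiset.coe_count]
    rw [hprof, hcnt, hcount]
    by_cases hzS : z ∈ S
    · simp [hzS, Int.toNat_of_nonneg (hpos z hzS).le]
    · simp [hzS, hzero z hzS]
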